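/- Suppose treatment effects are constant, Y_i(1) = τ + Y_i(0) for all i, the SDIM is unbiased (E[τ̂] = τ, equivalently Cov₁(π_i, Y_i(0)) = 0), and both equality conditions of the variance bound hold: (i) E_π̃[(1/N₁)Y(1) + (1/N₀)Y(0)] = (1/N₁)E_π[Y(1)] + (1/N₀)E_{1−π}[Y(0)], and (ii) for every i, (π_i/(N₁/N))Y_i(1) − ((1−π_i)/(N₀/N))Y_i(0) = (π_i/(N₁/N))E_π[Y(1)] − ((1−π_i)/(N₀/N))E_{1−π}[Y(0)]. Then for every i, π_i = N₁/N or Y_i(0) = E_π̃[Y(0)]. -/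

import Mathlib

open Finset

/-- Under constant treatment effects, unbiasedness, and the two equality
conditions of the variance bound, each unit has π_i = N₁/N or Y_i(0) equals the
π̃-weighted mean of Y(0). -/
theorem equality_conditions_imply_uniform_or_mean (N N1 N0 : ℕ)
    (hN1 : 0 < N1) (hN0 : 0 < N0) (hN : N1 + N0 = N)
    (Y0 Y1 π : Fin N → ℝ) (τ : ℝ)
    (hπ : ∀ i, 0 ≤ π i ∧ π i ≤ 1) (hπsum : ∑ i, π i = (N1 : ℝ))
    (hπt : 0 < ∑ i, π i * (1 - π i))
    (hconst : ∀ i, Y1 i = τ + Y0 i)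
    (hcov : ∑ i, (π i - (N1 : ℝ) / (N : ℝ)) * (Y0 i - (1 / (N : ℝ)) * ∑ j, Y0 j) = 0)
    (hi : (∑ i, π i * (1 - π i) * ((1 / (N1 : ℝ)) * Y1 i + (1 / (N0 : ℝ)) * Y0 i))
            / (∑ i, π i * (1 - π i))
          = (1 / (N1 : ℝ)) * ((∑ i, π i * Y1 i) / (N1 : ℝ))
            + (1 / (N0 : ℝ)) * ((∑ i, (1 - π i) * Y0 i) / (N0 : ℝ)))
    (hii : ∀ i, π i / ((N1 : ℝ) / (N : ℝ)) * Y1 i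
              - (1 - π i) / ((N0 : ℝ) / (N : ℝ)) * Y0 i
          = π i / ((N1 : ℝ) / (N : ℝ)) * ((∑ j, π j * Y1 j) / (N1 : ℝ))
            - (1 - π i) / ((N0 : ℝ) / (N : ℝ)) * ((∑ j, (1 - π j) * Y0 j) / (N0 : ℝ))) :
    ∀ i, π i = (N1 : ℝ) / (N : ℝ)
      ∨ Y0 i = (∑ j, π j * (1 - π j) * Y0 j) / (∑ j, π j * (1 - π j)) := by
  intro i
  have hn1 : (0:ℝ) < (N1:ℝ) := by exact_mod_cast hN1
  have hn0 : (0:ℝ) < (N0:ℝ) := by exact_mod_cast hN0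
  have hNr : (N:ℝ) = (N1:ℝ) + (N0:ℝ) := by exact_mod_cast hN.symm
  have hn : (0:ℝ) < (N:ℝ) := by rw [hNr]; linarith
  have hn' : (N:ℝ) ≠ 0 := ne_of_gt hn
  have hn1' : (N1:ℝ) ≠ 0 := ne_of_gt hn1
  have hn0' : (N0:ℝ) ≠ 0 := ne_of_gt hn0
  have hT' : (∑ j, π j * (1 - π j)) ≠ 0 := ne_of_gt hπt
  set S := ∑ j, Y0 j with hS
  set T := ∑ j, π j * (1 - π j) with hT
  set Q := ∑ j, π j * (1 - π j) * Y0 j with hQ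
  -- Step 1: from hcov, ∑ π Y0 = (N1/N) S
  have hP : ∑ j, π j * Y0 j = (N1:ℝ)/(N:ℝ) * S := by
    have e1 : ∑ j, (π j - (N1:ℝ)/(N:ℝ)) * (Y0 j - (1/(N:ℝ)) * S)
        = (∑ j, π j * Y0 j) - (1/(N:ℝ)) * S * (∑ j, π j)
          - (N1:ℝ)/(N:ℝ) * S + (N:ℝ) * ((N1:ℝ)/(N:ℝ) * ((1/(N:ℝ)) * S)) := by
      rw [Finset.sum_congr rfl (fun j _ => by ring :
        ∀ j ∈ Finset.univ, (π j - (N1:ℝ)/(N:ℝ)) * (Y0 j - (1/(N:ℝ)) * S)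
          = π j * Y0 j - (1/(N:ℝ)) * S * π j - ((N1:ℝ)/(N:ℝ) * Y0 j
            - (N1:ℝ)/(N:ℝ) * ((1/(N:ℝ)) * S)))]
      rw [Finset.sum_sub_distrib, Finset.sum_sub_distrib, Finset.sum_sub_distrib,
        ← Finset.mul_sum, ← Finset.mul_sum, Finset.sum_const, Finset.card_univ,
        Fintype.card_fin, nsmul_eq_mul]
      ring
    rw [e1, hπsum] at hcov
    have hc : (N:ℝ) * ((N1:ℝ)/(N:ℝ) * ((1/(N:ℝ)) * S)) = (N1:ℝ)/(N:ℝ) * S := by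
      field_simp
    have hc2 : (1/(N:ℝ)) * S * (N1:ℝ) = (N1:ℝ)/(N:ℝ) * S := by ring
    rw [hc, hc2] at hcov
    linarith [hcov]
  have hb : ∑ j, (1 - π j) * Y0 j = (N0:ℝ)/(N:ℝ) * S := by
    have e2 : ∑ j, (1 - π j) * Y0 j = S - ∑ j, π j * Y0 j := by
      rw [← Finset.sum_sub_distrib]
      exact Finset.sum_congr rfl (fun j _ => by ring)
    rw [e2, hP]
    field_simp
    linear_combination S * hNr
  have h1 : ∑ j, π j * Y1 j = τ * (N1:ℝ) + (N1:ℝ)/(N:ℝ) * S := by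
    have e3 : ∑ j, π j * Y1 j = τ * (∑ j, π j) + ∑ j, π j * Y0 j := by
      rw [Finset.mul_sum, ← Finset.sum_add_distrib]
      exact Finset.sum_congr rfl (fun j _ => by rw [hconst j]; ring)
    rw [e3, hπsum, hP]
  -- Step 2: from hi, Q = T * (S/N)
  have hQT : Q = T * (S/(N:ℝ)) := by
    have e4 : ∑ j, π j * (1 - π j) * ((1/(N1:ℝ)) * Y1 j + (1/(N0:ℝ)) * Y0 j)
        = τ/(N1:ℝ) * T + (1/(N1:ℝ) + 1/(N0:ℝ)) * Q := by
      rw [hT, hQ, Finset.mul_sum, Finset.mul_sum, ← Finset.sum_add_distrib]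
      exact Finset.sum_congr rfl (fun j _ => by rw [hconst j]; ring)
    rw [e4, h1, hb, div_eq_iff hT'] at hi
    have hRHS : (1/(N1:ℝ) * ((τ*(N1:ℝ) + (N1:ℝ)/(N:ℝ)*S)/(N1:ℝ))
        + 1/(N0:ℝ) * (((N0:ℝ)/(N:ℝ)*S)/(N0:ℝ)))
        = τ/(N1:ℝ) + (1/(N1:ℝ) + 1/(N0:ℝ)) * (S/(N:ℝ)) := by
      field_simp
      ring
    rw [hRHS] at hi
    have hk : (0:ℝ) < 1/(N1:ℝ) + 1/(N0:ℝ) := by positivity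
    have hiQ : (1/(N1:ℝ)+1/(N0:ℝ)) * Q = (1/(N1:ℝ)+1/(N0:ℝ)) * (T*(S/(N:ℝ))) := by
      linear_combination hi
    exact mul_left_cancel₀ (ne_of_gt hk) hiQ
  -- Step 3: the per-unit equality condition
  have h2 := hii i
  rw [hconst i, h1, hb] at h2
  have hkey : ((N:ℝ) * π i - (N1:ℝ)) * ((N:ℝ) * Y0 i - S) = 0 := by
    field_simp at h2
    rw [hNr] at h2
    have hc0 : ((N1:ℝ)^2*((N1:ℝ)+(N0:ℝ))^2*(N0:ℝ)^2) ≠ 0 := by positivity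
    have h4 : (((N1:ℝ)+(N0:ℝ)) * π i - (N1:ℝ)) * (((N1:ℝ)+(N0:ℝ)) * Y0 i - S)
        * ((N1:ℝ)^2*((N1:ℝ)+(N0:ℝ))^2*(N0:ℝ)^2) = 0 := by
      linear_combination ((N1:ℝ)^2*((N1:ℝ)+(N0:ℝ))^2*(N0:ℝ)^2) * h2
    rw [hNr]
    exact (mul_eq_zero.mp h4).resolve_right hc0
  rcases mul_eq_zero.mp hkey with h | h
  · left
    field_simp
    linarith
  · right
    rw [hQT, mul_div_cancel_left₀ _ hT']
    field_simp
    linarith [h]
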